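/- For every finite set P of at least 5 points in general position in the plane, there exist two non-crossing spanning trees T, S of P with |E(T) △ E(S)| = 2, say T \ S = {e₁}, S \ T = {e₂}, such that the segments e₁ and e₂ cross (i.e., T and S form a degenerate U-clique in the geometric tree graph). -/

import Mathlib

open Set

def Cross (a b c d : ℝ × ℝ) : Prop :=
  (openSegment ℝ a b ∩ openSegment ℝ c d).Nonempty

noncomputable section

def det2 (u v : ℝ × ℝ) : ℝ := u.1 * v.2 - u.2 * v.1

lemma det2_smul_right (w x : ℝ × ℝ) (r : ℝ) : det2 w (r • x) = r * det2 w x := by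
  simp [det2]; ring

lemma det2_add_right (w x y : ℝ × ℝ) : det2 w (x + y) = det2 w x + det2 w y := by
  simp [det2]; ring

lemma det2_self (w : ℝ × ℝ) : det2 w w = 0 := by simp [det2]; ring

lemma dep2 {u v : ℝ × ℝ} (h : det2 u v = 0) (hu : u ≠ 0) : ∃ t : ℝ, v = t • u := by
  rcases eq_or_ne u.1 0 with h1 | h1
  · have h2 : u.2 ≠ 0 := fun h2 => hu (Prod.ext h1 h2)
    refine ⟨v.2 / u.2, Prod.ext ?_ ?_⟩
    · simp only [Prod.smul_def, smul_eq_mul]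
      unfold det2 at h; field_simp; nlinarith [h]
    · simp only [Prod.smul_def, smul_eq_mul]; field_simp
  · refine ⟨v.1 / u.1, Prod.ext ?_ ?_⟩
    · simp only [Prod.smul_def, smul_eq_mul]; field_simp
    · simp only [Prod.smul_def, smul_eq_mul]
      unfold det2 at h; field_simp; nlinarith [h]

lemma collinear_of_det2 {a b c : ℝ × ℝ} (h : det2 (b - a) (c - a) = 0) :
    Collinear ℝ ({a, b, c} : Set (ℝ × ℝ)) := by
  rcases eq_or_ne b a with hb | hb
  · rw [hb, Set.insert_idem]
    exact collinear_pair ℝ a c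
  · obtain ⟨t, ht⟩ := dep2 h (sub_ne_zero.mpr hb)
    rw [collinear_iff_of_mem (show a ∈ ({a, b, c} : Set (ℝ × ℝ)) by simp)]
    refine ⟨b - a, ?_⟩
    intro p hp
    rcases hp with rfl | rfl | rfl
    · exact ⟨0, by simp⟩
    · exact ⟨1, by simp⟩
    · exact ⟨t, by rw [← ht]; simp⟩

lemma mem_openSegment_iff {a b z : ℝ × ℝ} :
    z ∈ openSegment ℝ a b ↔ ∃ t : ℝ, t ∈ Ioo (0:ℝ) 1 ∧ z = a + t • (b - a) := by
  rw [openSegment_eq_image']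
  constructor
  · rintro ⟨t, ht, rfl⟩; exact ⟨t, ht, rfl⟩
  · rintro ⟨t, ht, rfl⟩; exact ⟨t, ht, rfl⟩

lemma cross_comm {a b c d : ℝ × ℝ} (h : Cross a b c d) : Cross c d a b := by
  unfold Cross at *; rwa [Set.inter_comm]

lemma cross_swap_left {a b c d : ℝ × ℝ} (h : Cross a b c d) : Cross b a c d := by
  unfold Cross at *; rwa [openSegment_symm]

lemma cross_swap_right {a b c d : ℝ × ℝ} (h : Cross a b c d) : Cross a b d c :=
  cross_comm (cross_swap_left (cross_comm h))

lemma noCross_shared {a b d : ℝ × ℝ} (h : det2 (b - a) (d - a) ≠ 0) :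
    ¬ Cross a b a d := by
  rintro ⟨z, hz1, hz2⟩
  rw [mem_openSegment_iff] at hz1 hz2
  obtain ⟨t, ht, h1⟩ := hz1
  obtain ⟨s, hs, h2⟩ := hz2
  have he : t • (b - a) = s • (d - a) := by
    have h3 := h1.symm.trans h2
    have : a + t • (b - a) - a = a + s • (d - a) - a := by rw [h3]
    simpa using this
  have h4 : det2 (b - a) (t • (b - a)) = det2 (b - a) (s • (d - a)) := by rw [he]
  rw [det2_smul_right, det2_smul_right, det2_self, mul_zero] at h4
  have hs0 : s ≠ 0 := ne_of_gt hs.1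
  apply h
  rcases mul_eq_zero.mp h4.symm with h5 | h5
  · exact absurd h5 hs0
  · exact h5

lemma noCross_cone {o x u v : ℝ × ℝ}
    (h : ∀ α β : ℝ, 0 < α → 0 < β → x - o ≠ α • (u - o) + β • (v - o)) :
    ¬ Cross o x u v := by
  rintro ⟨z, hz1, hz2⟩
  rw [mem_openSegment_iff] at hz1 hz2
  obtain ⟨t, ht, h1⟩ := hz1
  obtain ⟨s, hs, h2⟩ := hz2
  have ht0 : (t:ℝ) ≠ 0 := ne_of_gt ht.1
  have key : t • (x - o) = (1 - s) • (u - o) + s • (v - o) := by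
    have h3 : o + t • (x - o) = u + s • (v - u) := h1.symm.trans h2
    linear_combination (norm := module) h3
  apply h ((1 - s) / t) (s / t) (div_pos (by linarith [hs.2]) ht.1) (div_pos hs.1 ht.1)
  calc x - o = (1/t) • (t • (x - o)) := by
        rw [smul_smul]; rw [one_div, inv_mul_cancel₀ ht0, one_smul]
    _ = (1/t) • ((1 - s) • (u - o) + s • (v - o)) := by rw [key]
    _ = ((1 - s)/t) • (u - o) + (s/t) • (v - o) := by
        rw [smul_add, smul_smul, smul_smul]; ring_nf

lemma noCross_sameside {a b c d : ℝ × ℝ} (h3 : det2 (b - a) (c - a) < 0)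
    (h4 : det2 (b - a) (d - a) < 0) : ¬ Cross a b c d := by
  rintro ⟨z, hz1, hz2⟩
  rw [mem_openSegment_iff] at hz1 hz2
  obtain ⟨t, ht, h1⟩ := hz1
  obtain ⟨s, hs, h2⟩ := hz2
  have e1 : det2 (b - a) (z - a) = 0 := by
    rw [h1]; simp only [add_sub_cancel_left]
    rw [det2_smul_right, det2_self, mul_zero]
  have e2 : z - a = (1 - s) • (c - a) + s • (d - a) := by
    rw [h2]; module
  have e3 : det2 (b - a) (z - a) = (1 - s) * det2 (b - a) (c - a) + s * det2 (b - a) (d - a) := by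
    rw [e2, det2_add_right, det2_smul_right, det2_smul_right]
  rw [e1] at e3
  nlinarith [hs.1, hs.2, e3]

lemma cross_of_dets {a b c d : ℝ × ℝ} (h1 : 0 < det2 (b - a) (c - a))
    (h2 : det2 (b - a) (d - a) < 0) (h3 : det2 (d - c) (a - c) < 0)
    (h4 : 0 < det2 (d - c) (b - c)) : Cross a b c d := by
  set A := det2 (d - c) (a - c) with hA
  set B := det2 (d - c) (b - c) with hB
  have hBA : 0 < B - A := by linarith
  set t : ℝ := -A / (B - A) with htdef
  have ht : t ∈ Ioo (0:ℝ) 1 := by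
    constructor
    · apply div_pos (by linarith) hBA
    · rw [div_lt_one hBA]; linarith
  set z : ℝ × ℝ := a + t • (b - a) with hz
  have hzc : z - c = (1 - t) • (a - c) + t • (b - c) := by
    rw [hz]; module
  have e0 : det2 (d - c) (z - c) = 0 := by
    rw [hzc, det2_add_right, det2_smul_right, det2_smul_right, ← hA, ← hB]
    rw [htdef]; field_simp; ring
  have hdc : d - c ≠ 0 := by
    intro h0
    rw [hB, h0] at h4
    simp [det2] at h4
  obtain ⟨s, hsz⟩ := dep2 e0 hdc
  have hza : z - a = (1 - s) • (c - a) + s • (d - a) := by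
    have : z - a = (c - a) + (z - c) := by module
    rw [this, hsz]; module
  have e1 : det2 (b - a) (z - a) = 0 := by
    rw [hz]; simp only [add_sub_cancel_left]
    rw [det2_smul_right, det2_self, mul_zero]
  have e2 : (1 - s) * det2 (b - a) (c - a) + s * det2 (b - a) (d - a) = 0 := by
    rw [← det2_smul_right, ← det2_smul_right, ← det2_add_right, ← hza, e1]
  have hs : s ∈ Ioo (0:ℝ) 1 := by
    constructor
    · nlinarith
    · nlinarith
  refine ⟨z, ?_, ?_⟩
  · rw [mem_openSegment_iff]; exact ⟨t, ht, hz⟩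
  · rw [mem_openSegment_iff]
    refine ⟨s, hs, ?_⟩
    have : z = c + (z - c) := by module
    rw [this, hsz]

end
section ParentGraph

set_option linter.unusedSectionVars false
set_option linter.unusedVariables false

variable {V : Type*}

def parentGraph (f : V → V) (root : V) : SimpleGraph V where
  Adj u v := u ≠ v ∧ ((u ≠ root ∧ f u = v) ∨ (v ≠ root ∧ f v = u))
  symm := by
    constructor
    rintro u v ⟨h1, h2⟩
    exact ⟨h1.symm, h2.symm⟩
  loopless := ⟨fun v h => h.1 rfl⟩

variable {f : V → V} {root : V} {ρ : V → ℕ}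

lemma parentGraph_adj {u v : V} :
    (parentGraph f root).Adj u v ↔ u ≠ v ∧ ((u ≠ root ∧ f u = v) ∨ (v ≠ root ∧ f v = u)) :=
  Iff.rfl

lemma parentGraph_adj_parent (hρ : ∀ v, v ≠ root → ρ (f v) < ρ v) {v : V} (hv : v ≠ root) :
    (parentGraph f root).Adj v (f v) := by
  refine ⟨fun h => ?_, Or.inl ⟨hv, rfl⟩⟩
  have := hρ v hv
  rw [← h] at this
  omega

lemma parentGraph_connected (hρ : ∀ v, v ≠ root → ρ (f v) < ρ v) :
    (parentGraph f root).Connected := by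
  have reach : ∀ n, ∀ x : V, ρ x ≤ n → (parentGraph f root).Reachable x root := by
    intro n
    induction n with
    | zero =>
      intro x hx
      by_cases hxr : x = root
      · exact hxr ▸ SimpleGraph.Reachable.refl _
      · exact absurd (hρ x hxr) (by omega)
    | succ n ih =>
      intro x hx
      by_cases hxr : x = root
      · exact hxr ▸ SimpleGraph.Reachable.refl _
      · exact ((parentGraph_adj_parent hρ hxr).reachable).trans
          (ih (f x) (by have := hρ x hxr; omega))
  have : Nonempty V := ⟨root⟩
  exact SimpleGraph.Connected.mk
    (fun x y => (reach (ρ x) x le_rfl).trans (reach (ρ y) y le_rfl).symm)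

/-- ancestor predicate -/
def Anc (f : V → V) (root v0 u : V) : Prop :=
  ∃ n, f^[n] u = v0 ∧ ∀ m < n, f^[m] u ≠ root

lemma anc_self {v0 : V} : Anc f root v0 v0 := ⟨0, rfl, by omega⟩

lemma anc_rank (hρ : ∀ v, v ≠ root → ρ (f v) < ρ v) {v0 : V} :
    ∀ n (u : V), f^[n] u = v0 → (∀ m < n, f^[m] u ≠ root) → ρ v0 ≤ ρ u := by
  intro n
  induction n with
  | zero => intro u h _; rw [Function.iterate_zero_apply] at h; rw [h]
  | succ n ih =>
    intro u h hg
    have hur : u ≠ root := by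
      have := hg 0 (by omega); rwa [Function.iterate_zero_apply] at this
    have h1 : f^[n] (f u) = v0 := by rwa [← Function.iterate_succ_apply]
    have h2 : ∀ m < n, f^[m] (f u) ≠ root := by
      intro m hm
      have := hg (m+1) (by omega)
      rwa [Function.iterate_succ_apply] at this
    have := ih (f u) h1 h2
    have := hρ u hur
    omega

lemma anc_not_parent (hρ : ∀ v, v ≠ root → ρ (f v) < ρ v) {v0 : V} (hv0 : v0 ≠ root) :
    ¬ Anc f root v0 (f v0) := by
  rintro ⟨n, h, hg⟩
  have := anc_rank hρ n (f v0) h hg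
  have := hρ v0 hv0
  omega

lemma anc_step {v0 u : V} (hur : u ≠ root) (huv : u ≠ v0) :
    Anc f root v0 u ↔ Anc f root v0 (f u) := by
  constructor
  · rintro ⟨n, h, hg⟩
    cases n with
    | zero => rw [Function.iterate_zero_apply] at h; exact absurd h huv
    | succ n =>
      refine ⟨n, by rwa [← Function.iterate_succ_apply], fun m hm => ?_⟩
      have := hg (m+1) (by omega)
      rwa [Function.iterate_succ_apply] at this
  · rintro ⟨n, h, hg⟩
    refine ⟨n+1, by rwa [Function.iterate_succ_apply], fun m hm => ?_⟩
    cases m with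
    | zero => rwa [Function.iterate_zero_apply]
    | succ m =>
      rw [Function.iterate_succ_apply]
      exact hg m (by omega)

lemma anc_edge_invariant (hρ : ∀ v, v ≠ root → ρ (f v) < ρ v) {v0 a b : V}
    (hab : (parentGraph f root).Adj a b) (hne : s(a, b) ≠ s(v0, f v0)) :
    (Anc f root v0 a ↔ Anc f root v0 b) := by
  rcases hab.2 with ⟨har, hfa⟩ | ⟨hbr, hfb⟩
  · have hav : a ≠ v0 := by
      rintro rfl; exact hne (by rw [hfa])
    rw [← hfa]; exact anc_step har hav
  · have hbv : b ≠ v0 := by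
      rintro rfl; exact hne (by rw [hfb, Sym2.eq_swap])
    rw [← hfb]; exact (anc_step hbr hbv).symm

lemma anc_walk_invariant (hρ : ∀ v, v ≠ root → ρ (f v) < ρ v) {v0 : V} {x y : V}
    (p : (parentGraph f root).Walk x y) (hp : s(v0, f v0) ∉ p.edges) :
    (Anc f root v0 x ↔ Anc f root v0 y) := by
  induction p with
  | nil => rfl
  | cons h q ih =>
    rw [SimpleGraph.Walk.edges_cons, List.mem_cons] at hp
    push_neg at hp
    exact (anc_edge_invariant hρ h (Ne.symm hp.1)).trans (ih hp.2)

lemma parentGraph_bridge (hρ : ∀ v, v ≠ root → ρ (f v) < ρ v) {v0 : V} (hv0 : v0 ≠ root) :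
    (parentGraph f root).IsBridge s(v0, f v0) := by
  rw [SimpleGraph.isBridge_iff_adj_and_forall_walk_mem_edges]
  intro p
  by_contra hne
  have := anc_walk_invariant hρ p hne
  rw [iff_iff_implies_and_implies] at this
  exact anc_not_parent hρ hv0 (this.1 anc_self)

lemma parentGraph_acyclic (hρ : ∀ v, v ≠ root → ρ (f v) < ρ v) :
    (parentGraph f root).IsAcyclic := by
  rw [SimpleGraph.isAcyclic_iff_forall_adj_isBridge]
  intro v w hvw
  rcases hvw.2 with ⟨hvr, hfv⟩ | ⟨hwr, hfw⟩
  · rw [← hfv]; exact parentGraph_bridge hρ hvr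
  · rw [← hfw, Sym2.eq_swap]; exact parentGraph_bridge hρ hwr

lemma parentGraph_isTree (hρ : ∀ v, v ≠ root → ρ (f v) < ρ v) :
    (parentGraph f root).IsTree :=
  ⟨parentGraph_connected hρ, parentGraph_acyclic hρ⟩

lemma parentGraph_edgeSet (hρ : ∀ v, v ≠ root → ρ (f v) < ρ v) {e : Sym2 V} :
    e ∈ (parentGraph f root).edgeSet ↔ ∃ v, v ≠ root ∧ e = s(v, f v) := by
  induction e with
  | _ a b =>
    rw [SimpleGraph.mem_edgeSet, parentGraph_adj]
    constructor
    · rintro ⟨hab, ⟨har, hfa⟩ | ⟨hbr, hfb⟩⟩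
      · exact ⟨a, har, by rw [hfa]⟩
      · exact ⟨b, hbr, by rw [hfb, Sym2.eq_swap]⟩
    · rintro ⟨v, hvr, he⟩
      rw [Sym2.eq_iff] at he
      rcases he with ⟨rfl, rfl⟩ | ⟨rfl, rfl⟩
      · exact ⟨(parentGraph_adj_parent hρ hvr).1, Or.inl ⟨hvr, rfl⟩⟩
      · exact ⟨(parentGraph_adj_parent hρ hvr).1.symm, Or.inr ⟨hvr, rfl⟩⟩

end ParentGraph
-- === selection ===
noncomputable section

def GenPos (P : Finset (ℝ × ℝ)) : Prop :=
  ∀ a ∈ P, ∀ b ∈ P, ∀ c ∈ P, a ≠ b → a ≠ c → b ≠ c →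
    ¬ Collinear ℝ ({a, b, c} : Set (ℝ × ℝ))

lemma genpos_det2 {P : Finset (ℝ × ℝ)} (hgen : GenPos P) {a b c : ℝ × ℝ}
    (ha : a ∈ P) (hb : b ∈ P) (hc : c ∈ P) (h1 : a ≠ b) (h2 : a ≠ c) (h3 : b ≠ c) :
    det2 (b - a) (c - a) ≠ 0 :=
  fun h => hgen a ha b hb c hc h1 h2 h3 (collinear_of_det2 h)

def HP (u : ℝ × ℝ) : Prop := 0 < u.1 ∨ (u.1 = 0 ∧ 0 < u.2)

def nrm (u : ℝ × ℝ) : ℝ := Real.sqrt (u.1 ^ 2 + u.2 ^ 2)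

def key' (u : ℝ × ℝ) : ℝ := u.2 / (nrm u + u.1)

lemma nrm_sq (u : ℝ × ℝ) : nrm u ^ 2 = u.1 ^ 2 + u.2 ^ 2 :=
  Real.sq_sqrt (by positivity)

lemma nrm_nonneg (u : ℝ × ℝ) : 0 ≤ nrm u := Real.sqrt_nonneg _

lemma nrm_ge_abs2 (u : ℝ × ℝ) : |u.2| ≤ nrm u := by
  rw [← Real.sqrt_sq_eq_abs]
  exact Real.sqrt_le_sqrt (by nlinarith [sq_nonneg u.1])

lemma hp_fst_nonneg {u : ℝ × ℝ} (hu : HP u) : 0 ≤ u.1 := by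
  rcases hu with h | h
  · linarith
  · linarith [h.1.le]

lemma denom_pos {u : ℝ × ℝ} (hu : HP u) : 0 < nrm u + u.1 := by
  rcases hu with h | ⟨h1, h2⟩
  · linarith [nrm_nonneg u]
  · have : |u.2| ≤ nrm u := nrm_ge_abs2 u
    rw [abs_of_pos h2] at this
    linarith

lemma mult_nonneg {u v : ℝ × ℝ} (hu : HP u) (hv : HP v) :
    0 ≤ (nrm u + u.1) * (nrm v + v.1) + u.2 * v.2 := by
  have h1 : |u.2| ≤ nrm u + u.1 := by linarith [nrm_ge_abs2 u, hp_fst_nonneg hu]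
  have h2 : |v.2| ≤ nrm v + v.1 := by linarith [nrm_ge_abs2 v, hp_fst_nonneg hv]
  have h3 : |u.2| * |v.2| ≤ (nrm u + u.1) * (nrm v + v.1) :=
    mul_le_mul h1 h2 (abs_nonneg _) (le_trans (abs_nonneg _) h1)
  rw [← abs_mul] at h3
  linarith [neg_abs_le (u.2 * v.2)]

lemma key_identity (u v : ℝ × ℝ) :
    det2 u v * (2 * (nrm u + u.1) * (nrm v + v.1)) =
      ((nrm u + u.1) * v.2 - (nrm v + v.1) * u.2) *
        ((nrm u + u.1) * (nrm v + v.1) + u.2 * v.2) := by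
  have hsu := nrm_sq u
  have hsv := nrm_sq v
  unfold det2
  linear_combination (-(v.2 * nrm v + v.1 * v.2)) * hsu + (u.2 * nrm u + u.1 * u.2) * hsv

lemma det2_pos_of_key_lt {u v : ℝ × ℝ} (hu : HP u) (hv : HP v)
    (hne : det2 u v ≠ 0) (hk : key' u < key' v) : 0 < det2 u v := by
  have ha := denom_pos hu
  have hb := denom_pos hv
  have hk' : u.2 * (nrm v + v.1) < v.2 * (nrm u + u.1) := by
    rw [key', key', div_lt_div_iff₀ ha hb] at hk
    exact hk
  have hid := key_identity u v
  have hm := mult_nonneg hu hv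
  have hF : 0 < (nrm u + u.1) * v.2 - (nrm v + v.1) * u.2 := by nlinarith
  have hD : 0 < 2 * (nrm u + u.1) * (nrm v + v.1) := by positivity
  rcases lt_trichotomy (det2 u v) 0 with h | h | h
  · have hL : det2 u v * (2 * (nrm u + u.1) * (nrm v + v.1)) < 0 :=
      mul_neg_of_neg_of_pos h hD
    nlinarith [mul_nonneg hF.le hm]
  · exact absurd h hne
  · exact h

lemma key_ne_of_det2_ne {u v : ℝ × ℝ} (hu : HP u) (hv : HP v)
    (hne : det2 u v ≠ 0) : key' u ≠ key' v := by
  intro he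
  have ha := denom_pos hu
  have hb := denom_pos hv
  have he' : u.2 * (nrm v + v.1) = v.2 * (nrm u + u.1) := by
    rw [key', key', div_eq_div_iff (ne_of_gt ha) (ne_of_gt hb)] at he
    exact he
  have hid := key_identity u v
  have hF : (nrm u + u.1) * v.2 - (nrm v + v.1) * u.2 = 0 := by nlinarith
  have : det2 u v * (2 * (nrm u + u.1) * (nrm v + v.1)) = 0 := by
    rw [hid, hF, zero_mul]
  have h2 : (2 * (nrm u + u.1) * (nrm v + v.1)) ≠ 0 := by positivity
  exact hne (by
    rcases mul_eq_zero.mp this with h | h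
    · exact h
    · exact absurd h h2)

lemma exists_lex_min {P : Finset (ℝ × ℝ)} (hne : P.Nonempty) :
    ∃ o ∈ P, ∀ q ∈ P, q ≠ o → HP (q - o) := by
  obtain ⟨x0, hx0, hx0min⟩ := P.exists_min_image Prod.fst hne
  have hP' : (P.filter (fun p => p.1 = x0.1)).Nonempty := ⟨x0, by simp [hx0]⟩
  obtain ⟨o, ho', homin⟩ := (P.filter (fun p => p.1 = x0.1)).exists_min_image Prod.snd hP'
  rw [Finset.mem_filter] at ho'
  refine ⟨o, ho'.1, fun q hq hqo => ?_⟩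
  have h1 : o.1 ≤ q.1 := ho'.2 ▸ hx0min q hq
  rcases eq_or_lt_of_le h1 with heq | hlt
  · right
    have hq' : q ∈ P.filter (fun p => p.1 = x0.1) := by
      rw [Finset.mem_filter]; exact ⟨hq, heq ▸ ho'.2⟩
    have h2 : o.2 ≤ q.2 := homin q hq'
    have h3 : q.2 ≠ o.2 := fun h => hqo (Prod.ext heq.symm h)
    constructor
    · simp [Prod.fst_sub]; linarith
    · simp [Prod.snd_sub]; cases lt_or_eq_of_le h2 with
      | inl h => linarith
      | inr h => exact absurd h.symm h3
  · left; simp [Prod.fst_sub]; linarith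

lemma noCross_cone_sign {o x u v w : ℝ × ℝ} (h1 : det2 w (x - o) < 0)
    (h2 : 0 ≤ det2 w (u - o)) (h3 : 0 ≤ det2 w (v - o)) : ¬ Cross o x u v := by
  apply noCross_cone
  intro α β hα hβ heq
  have hcg := congrArg (det2 w) heq
  rw [det2_add_right, det2_smul_right, det2_smul_right] at hcg
  nlinarith

def NonCrossing {P : Finset (ℝ × ℝ)} (T : SimpleGraph P) : Prop :=
  ∀ a b c d : P, T.Adj a b → T.Adj c d → s(a, b) ≠ s(c, d) →
    ¬ Cross (a : ℝ × ℝ) b c d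

lemma noncrossing_parentGraph {P : Finset (ℝ × ℝ)} {f : ↥P → ↥P} {root : ↥P}
    (hf : ∀ v w : ↥P, v ≠ root → w ≠ root → s(v, f v) ≠ s(w, f w) →
      ¬ Cross (v : ℝ × ℝ) (f v) w (f w)) :
    NonCrossing (parentGraph f root) := by
  intro a b c d hab hcd hne
  rcases hab.2 with ⟨har, hfa⟩ | ⟨hbr, hfb⟩
  · rcases hcd.2 with ⟨hcr, hfc⟩ | ⟨hdr, hfd⟩
    · have := hf a c har hcr (by rw [hfa, hfc]; exact hne)
      rw [hfa, hfc] at this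
      exact this
    · have := hf a d har hdr (by rw [hfa, hfd, Sym2.eq_swap (a := d)]; exact hne)
      rw [hfa, hfd] at this
      exact fun h => this (cross_swap_right h)
  · rcases hcd.2 with ⟨hcr, hfc⟩ | ⟨hdr, hfd⟩
    · have := hf b c hbr hcr (by rw [hfb, hfc, Sym2.eq_swap (a := b)]; exact hne)
      rw [hfb, hfc] at this
      exact fun h => this (cross_swap_left h)
    · have := hf b d hbr hdr
        (by rw [hfb, hfd, Sym2.eq_swap (a := b), Sym2.eq_swap (a := d)]; exact hne)
      rw [hfb, hfd] at this
      exact fun h => this (cross_swap_left (cross_swap_right h))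

lemma exists_config {P : Finset (ℝ × ℝ)} (hgen : GenPos P) (hcard : 5 ≤ P.card) :
    ∃ o q1 q2 q3 q4 : ℝ × ℝ, o ∈ P ∧ q1 ∈ P ∧ q2 ∈ P ∧ q3 ∈ P ∧ q4 ∈ P ∧
      q1 ≠ o ∧ q2 ≠ o ∧ q3 ≠ o ∧ q4 ≠ o ∧ q1 ≠ q2 ∧ q1 ≠ q3 ∧ q1 ≠ q4 ∧
      q2 ≠ q3 ∧ q2 ≠ q4 ∧ q3 ≠ q4 ∧
      0 < det2 (q1 - o) (q2 - o) ∧ 0 < det2 (q1 - o) (q3 - o) ∧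
      0 < det2 (q1 - o) (q4 - o) ∧ 0 < det2 (q2 - o) (q3 - o) ∧
      0 < det2 (q2 - o) (q4 - o) ∧ 0 < det2 (q3 - o) (q4 - o) ∧
      ∀ q ∈ P, q ≠ o → q ≠ q1 → q ≠ q2 → q ≠ q3 → q ≠ q4 →
        0 < det2 (q4 - o) (q - o) := by
  have hPne : P.Nonempty := by rw [← Finset.card_pos]; omega
  obtain ⟨o, hoP, hHP⟩ := exists_lex_min hPne
  have key_lt : ∀ a b : ℝ × ℝ, a ∈ P → b ∈ P → a ≠ o → b ≠ o → a ≠ b →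
      key' (a - o) ≤ key' (b - o) → 0 < det2 (a - o) (b - o) := by
    intro a b ha hb hao hbo hab hk
    have hdet : det2 (a - o) (b - o) ≠ 0 :=
      genpos_det2 hgen hoP ha hb (Ne.symm hao) (Ne.symm hbo) hab
    have hu := hHP a ha hao
    have hv := hHP b hb hbo
    rcases eq_or_lt_of_le hk with he | hlt
    · exact absurd he (key_ne_of_det2_ne hu hv hdet)
    · exact det2_pos_of_key_lt hu hv hdet hlt
  set S0 := P.erase o with hS0
  have hS0c : 4 ≤ S0.card := by rw [hS0, Finset.card_erase_of_mem hoP]; omega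
  obtain ⟨q1, hq1, hq1m⟩ := S0.exists_min_image (fun q => key' (q - o))
    (by rw [← Finset.card_pos]; omega)
  set S1 := S0.erase q1 with hS1
  have hS1c : 3 ≤ S1.card := by rw [hS1, Finset.card_erase_of_mem hq1]; omega
  obtain ⟨q2, hq2, hq2m⟩ := S1.exists_min_image (fun q => key' (q - o))
    (by rw [← Finset.card_pos]; omega)
  set S2 := S1.erase q2 with hS2
  have hS2c : 2 ≤ S2.card := by rw [hS2, Finset.card_erase_of_mem hq2]; omega
  obtain ⟨q3, hq3, hq3m⟩ := S2.exists_min_image (fun q => key' (q - o))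
    (by rw [← Finset.card_pos]; omega)
  set S3 := S2.erase q3 with hS3
  have hS3c : 1 ≤ S3.card := by rw [hS3, Finset.card_erase_of_mem hq3]; omega
  obtain ⟨q4, hq4, hq4m⟩ := S3.exists_min_image (fun q => key' (q - o))
    (by rw [← Finset.card_pos]; omega)
  have hq4' : q4 ∈ S2 := (Finset.mem_erase.mp hq4).2
  have hq4'' : q4 ∈ S1 := (Finset.mem_erase.mp hq4').2
  have hq4''' : q4 ∈ S0 := (Finset.mem_erase.mp hq4'').2
  have hq3' : q3 ∈ S1 := (Finset.mem_erase.mp hq3).2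
  have hq3'' : q3 ∈ S0 := (Finset.mem_erase.mp hq3').2
  have hq2' : q2 ∈ S0 := (Finset.mem_erase.mp hq2).2
  have m1 : q1 ∈ P := (Finset.mem_erase.mp hq1).2
  have m2 : q2 ∈ P := (Finset.mem_erase.mp hq2').2
  have m3 : q3 ∈ P := (Finset.mem_erase.mp hq3'').2
  have m4 : q4 ∈ P := (Finset.mem_erase.mp hq4''').2
  have n1 : q1 ≠ o := (Finset.mem_erase.mp hq1).1
  have n2 : q2 ≠ o := (Finset.mem_erase.mp hq2').1
  have n3 : q3 ≠ o := (Finset.mem_erase.mp hq3'').1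
  have n4 : q4 ≠ o := (Finset.mem_erase.mp hq4''').1
  have n12 : q2 ≠ q1 := (Finset.mem_erase.mp hq2).1
  have n13 : q3 ≠ q1 := (Finset.mem_erase.mp hq3').1
  have n14 : q4 ≠ q1 := (Finset.mem_erase.mp hq4'').1
  have n23 : q3 ≠ q2 := (Finset.mem_erase.mp hq3).1
  have n24 : q4 ≠ q2 := (Finset.mem_erase.mp hq4').1
  have n34 : q4 ≠ q3 := (Finset.mem_erase.mp hq4).1
  refine ⟨o, q1, q2, q3, q4, hoP, m1, m2, m3, m4, n1, n2, n3, n4,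
    n12.symm, n13.symm, n14.symm, n23.symm, n24.symm, n34.symm,
    key_lt q1 q2 m1 m2 n1 n2 n12.symm (hq1m q2 hq2'),
    key_lt q1 q3 m1 m3 n1 n3 n13.symm (hq1m q3 hq3''),
    key_lt q1 q4 m1 m4 n1 n4 n14.symm (hq1m q4 hq4'''),
    key_lt q2 q3 m2 m3 n2 n3 n23.symm (hq2m q3 hq3'),
    key_lt q2 q4 m2 m4 n2 n4 n24.symm (hq2m q4 hq4''),
    key_lt q3 q4 m3 m4 n3 n4 n34.symm (hq3m q4 hq4'),
    ?_⟩
  intro q hq hqo hqq1 hqq2 hqq3 hqq4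
  have hqS3 : q ∈ S3 := by
    rw [hS3, Finset.mem_erase, hS2, Finset.mem_erase, hS1, Finset.mem_erase,
      hS0, Finset.mem_erase]
    exact ⟨hqq3, hqq2, hqq1, hqo, hq⟩
  exact key_lt q4 q m4 hq n4 hqo (Ne.symm hqq4) (hq4m q hqS3)

end

lemma build_case {P : Finset (ℝ × ℝ)} (f g : ↥P → ↥P) (root A B C D : ↥P)
    (ρf ρg : ↥P → ℕ)
    (hρf : ∀ v, v ≠ root → ρf (f v) < ρf v)
    (hρg : ∀ v, v ≠ root → ρg (g v) < ρg v)
    (hfnc : ∀ v w : ↥P, v ≠ root → w ≠ root → s(v, f v) ≠ s(w, f w) →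
      ¬ Cross (v : ℝ × ℝ) (f v) w (f w))
    (hgnc : ∀ v w : ↥P, v ≠ root → w ≠ root → s(v, g v) ≠ s(w, g w) →
      ¬ Cross (v : ℝ × ℝ) (g v) w (g w))
    (hA : A ≠ root) (hfA : f A = B) (hC : C ≠ root) (hgC : g C = D)
    (hTmS : ∀ v, v ≠ root → s(v, f v) ≠ s(A, B) → ∃ w, w ≠ root ∧ s(v, f v) = s(w, g w))
    (hSmT : ∀ v, v ≠ root → s(v, g v) ≠ s(C, D) → ∃ w, w ≠ root ∧ s(v, g v) = s(w, f w))
    (hABS : ∀ w, w ≠ root → s(A, B) ≠ s(w, g w))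
    (hCDT : ∀ w, w ≠ root → s(C, D) ≠ s(w, f w))
    (hcross : Cross (A : ℝ × ℝ) B C D) :
    ∃ (T S : SimpleGraph P) (a b c d : P),
      T.IsTree ∧ NonCrossing T ∧ S.IsTree ∧ NonCrossing S ∧
      (symmDiff T.edgeSet S.edgeSet).ncard = 2 ∧
      T.edgeSet \ S.edgeSet = {s(a, b)} ∧
      S.edgeSet \ T.edgeSet = {s(c, d)} ∧
      Cross (a : ℝ × ℝ) b c d := by
  have hTS : (parentGraph f root).edgeSet \ (parentGraph g root).edgeSet = {s(A, B)} := by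
    ext e
    simp only [Set.mem_diff, Set.mem_singleton_iff]
    constructor
    · rintro ⟨heT, heS⟩
      obtain ⟨v, hv, rfl⟩ := (parentGraph_edgeSet hρf).mp heT
      by_contra hne
      obtain ⟨w, hw, he⟩ := hTmS v hv hne
      exact heS ((parentGraph_edgeSet hρg).mpr ⟨w, hw, he⟩)
    · rintro rfl
      refine ⟨(parentGraph_edgeSet hρf).mpr ⟨A, hA, by rw [hfA]⟩, fun heS => ?_⟩
      obtain ⟨w, hw, he⟩ := (parentGraph_edgeSet hρg).mp heS
      exact hABS w hw he
  have hST : (parentGraph g root).edgeSet \ (parentGraph f root).edgeSet = {s(C, D)} := by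
    ext e
    simp only [Set.mem_diff, Set.mem_singleton_iff]
    constructor
    · rintro ⟨heS, heT⟩
      obtain ⟨v, hv, rfl⟩ := (parentGraph_edgeSet hρg).mp heS
      by_contra hne
      obtain ⟨w, hw, he⟩ := hSmT v hv hne
      exact heT ((parentGraph_edgeSet hρf).mpr ⟨w, hw, he⟩)
    · rintro rfl
      refine ⟨(parentGraph_edgeSet hρg).mpr ⟨C, hC, by rw [hgC]⟩, fun heT => ?_⟩
      obtain ⟨w, hw, he⟩ := (parentGraph_edgeSet hρf).mp heT
      exact hCDT w hw he
  have hne12 : s(A, B) ≠ s(C, D) := by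
    have := hABS C hC
    rwa [hgC] at this
  refine ⟨parentGraph f root, parentGraph g root, A, B, C, D,
    parentGraph_isTree hρf, noncrossing_parentGraph hfnc,
    parentGraph_isTree hρg, noncrossing_parentGraph hgnc, ?_, hTS, hST, hcross⟩
  rw [Set.symmDiff_def, hTS, hST, Set.singleton_union]
  exact Set.ncard_pair hne12


set_option maxHeartbeats 1000000 in
theorem stmt_19 (P : Finset (ℝ × ℝ)) (hgen : GenPos P) (hcard : 5 ≤ P.card) :
    ∃ (T S : SimpleGraph P) (a b c d : P),
      T.IsTree ∧ NonCrossing T ∧ S.IsTree ∧ NonCrossing S ∧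
      (symmDiff T.edgeSet S.edgeSet).ncard = 2 ∧
      T.edgeSet \ S.edgeSet = {s(a, b)} ∧
      S.edgeSet \ T.edgeSet = {s(c, d)} ∧
      Cross (a : ℝ × ℝ) b c d := by
  classical
  obtain ⟨o, q1, q2, q3, q4, hoP, m1, m2, m3, m4, n1, n2, n3, n4,
    d12, d13, d14, d23, d24, d34, c12, c13, c14, c23, c24, c34, hrest⟩ :=
    exists_config hgen hcard
  -- subtype points
  set R : ↥P := ⟨o, hoP⟩ with hRdef
  set A1 : ↥P := ⟨q1, m1⟩ with hA1def
  set A2 : ↥P := ⟨q2, m2⟩ with hA2def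
  set A3 : ↥P := ⟨q3, m3⟩ with hA3def
  set A4 : ↥P := ⟨q4, m4⟩ with hA4def
  have s1R : A1 ≠ R := fun h => n1 (congrArg Subtype.val h)
  have s2R : A2 ≠ R := fun h => n2 (congrArg Subtype.val h)
  have s3R : A3 ≠ R := fun h => n3 (congrArg Subtype.val h)
  have s4R : A4 ≠ R := fun h => n4 (congrArg Subtype.val h)
  have s12 : A1 ≠ A2 := fun h => d12 (congrArg Subtype.val h)
  have s13 : A1 ≠ A3 := fun h => d13 (congrArg Subtype.val h)
  have s14 : A1 ≠ A4 := fun h => d14 (congrArg Subtype.val h)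
  have s23 : A2 ≠ A3 := fun h => d23 (congrArg Subtype.val h)
  have s24 : A2 ≠ A4 := fun h => d24 (congrArg Subtype.val h)
  have s34 : A3 ≠ A4 := fun h => d34 (congrArg Subtype.val h)
  -- reversed determinants
  have r21 : det2 (q2 - o) (q1 - o) < 0 := by
    have h : det2 (q2 - o) (q1 - o) = -det2 (q1 - o) (q2 - o) := by simp [det2]; ring
    rw [h]; linarith
  have r31 : det2 (q3 - o) (q1 - o) < 0 := by
    have h : det2 (q3 - o) (q1 - o) = -det2 (q1 - o) (q3 - o) := by simp [det2]; ring
    rw [h]; linarith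
  have r41 : det2 (q4 - o) (q1 - o) < 0 := by
    have h : det2 (q4 - o) (q1 - o) = -det2 (q1 - o) (q4 - o) := by simp [det2]; ring
    rw [h]; linarith
  have r32 : det2 (q3 - o) (q2 - o) < 0 := by
    have h : det2 (q3 - o) (q2 - o) = -det2 (q2 - o) (q3 - o) := by simp [det2]; ring
    rw [h]; linarith
  have r42 : det2 (q4 - o) (q2 - o) < 0 := by
    have h : det2 (q4 - o) (q2 - o) = -det2 (q2 - o) (q4 - o) := by simp [det2]; ring
    rw [h]; linarith
  have r43 : det2 (q4 - o) (q3 - o) < 0 := by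
    have h : det2 (q4 - o) (q3 - o) = -det2 (q3 - o) (q4 - o) := by simp [det2]; ring
    rw [h]; linarith
  have dneg : ∀ w x : ℝ × ℝ, det2 (-w) x = -det2 w x := by
    intro w x; simp [det2]; ring
  -- shared-endpoint helper
  have NC : ∀ a b d : ℝ × ℝ, a ∈ P → b ∈ P → d ∈ P → a ≠ b → a ≠ d → b ≠ d →
      ¬ Cross a b a d := fun a b d ha hb hd h1 h2 h3 =>
    noCross_shared (genpos_det2 hgen ha hb hd h1 h2 h3)
  -- coercion helpers
  have coeR : ((R : ↥P) : ℝ × ℝ) = o := rfl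
  have hxP : ∀ x : ↥P, (x : ℝ × ℝ) ∈ P := fun x => x.2
  have cne : ∀ {x y : ↥P}, x ≠ y → (x : ℝ × ℝ) ≠ (y : ℝ × ℝ) :=
    fun h he => h (Subtype.ext he)
  have hoo : ∀ x y : ↥P, x ≠ R → y ≠ R → x ≠ y →
      ¬ Cross (x : ℝ × ℝ) o (y : ℝ × ℝ) o := by
    intro x y hx hy hxy hC
    exact NC o x y hoP x.2 y.2 (Ne.symm (cne hx)) (Ne.symm (cne hy)) (cne hxy)
      (cross_swap_right (cross_swap_left hC))
  -- rest points: everything except o,q1..q4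
  have hrest' : ∀ x : ↥P, x ≠ R → x ≠ A1 → x ≠ A2 → x ≠ A3 → x ≠ A4 →
      0 < det2 (q4 - o) ((x : ℝ × ℝ) - o) := by
    intro x h0 h1 h2 h3 h4
    exact hrest x x.2 (cne h0) (cne h1) (cne h2) (cne h3) (cne h4)
  have hD132 : det2 (q3 - q1) (q2 - q1) ≠ 0 :=
    genpos_det2 hgen m1 m3 m2 d13 d12 d23.symm
  rcases lt_or_gt_of_ne hD132 with hcA | hcA'
  ·
    -- Case A : swap [o,q2] <-> [q1,q3]
    set f : ↥P → ↥P := fun v => if v = A3 then A2 else R with hfdef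
    set g : ↥P → ↥P := fun v => if v = A3 then A1 else if v = A2 then A3 else R with hgdef
    have hf3 : f A3 = A2 := by rw [hfdef]; simp
    have hfo : ∀ v, v ≠ A3 → f v = R := by intro v hv; rw [hfdef]; simp [hv]
    have hg3 : g A3 = A1 := by rw [hgdef]; simp
    have hg2 : g A2 = A3 := by rw [hgdef]; simp [s23]
    have hgo : ∀ v, v ≠ A3 → v ≠ A2 → g v = R := by
      intro v h3 h2; rw [hgdef]; simp [h2, h3]
    have HX : ∀ x : ↥P, x ≠ R → x ≠ A3 → ¬ Cross (q3 : ℝ × ℝ) q2 (x : ℝ × ℝ) o := by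
      intro x hxR hx3 hC
      by_cases hx2 : x = A2
      · subst hx2
        exact NC q2 q3 o m2 m3 hoP d23 n2 n3 (cross_swap_left hC)
      · have hC' : Cross o (x : ℝ × ℝ) q3 q2 := cross_swap_left (cross_comm hC)
        by_cases hx1 : x = A1
        · subst hx1
          exact noCross_cone_sign r21 c23.le (le_of_eq (det2_self _).symm) hC'
        · by_cases hx4 : x = A4
          · subst hx4
            refine noCross_cone_sign (w := -(q3 - o)) ?_ ?_ ?_ hC'
            · rw [dneg]; linarith
            · rw [dneg, det2_self]; norm_num
            · rw [dneg]; linarith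
          · have hx := hrest' x hxR hx1 hx2 hx3 hx4
            refine noCross_cone_sign (w := -(q4 - o)) ?_ ?_ ?_ hC'
            · rw [dneg]; linarith
            · rw [dneg]; linarith
            · rw [dneg]; linarith
    have HY2 : ∀ x : ↥P, x ≠ R → x ≠ A2 → x ≠ A3 → ¬ Cross (q2 : ℝ × ℝ) q3 (x : ℝ × ℝ) o := by
      intro x hxR hx2 hx3 hC
      have hC' : Cross o (x : ℝ × ℝ) q2 q3 := cross_swap_left (cross_comm hC)
      by_cases hx1 : x = A1
      · subst hx1
        exact noCross_cone_sign r21 (le_of_eq (det2_self _).symm) c23.le hC'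
      · by_cases hx4 : x = A4
        · subst hx4
          refine noCross_cone_sign (w := -(q3 - o)) ?_ ?_ ?_ hC'
          · rw [dneg]; linarith
          · rw [dneg]; linarith
          · rw [dneg, det2_self]; norm_num
        · have hx := hrest' x hxR hx1 hx2 hx3 hx4
          refine noCross_cone_sign (w := -(q4 - o)) ?_ ?_ ?_ hC'
          · rw [dneg]; linarith
          · rw [dneg]; linarith
          · rw [dneg]; linarith
    have HY3 : ∀ x : ↥P, x ≠ R → x ≠ A2 → x ≠ A3 → ¬ Cross (q3 : ℝ × ℝ) q1 (x : ℝ × ℝ) o := by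
      intro x hxR hx2 hx3 hC
      by_cases hx1 : x = A1
      · subst hx1
        exact NC q1 o q3 m1 hoP m3 n1 d13 (Ne.symm n3) (cross_swap_right (cross_comm hC))
      · have hC' : Cross o (x : ℝ × ℝ) q3 q1 := cross_swap_left (cross_comm hC)
        by_cases hx4 : x = A4
        · subst hx4
          refine noCross_cone_sign (w := -(q3 - o)) ?_ ?_ ?_ hC'
          · rw [dneg]; linarith
          · rw [dneg, det2_self]; norm_num
          · rw [dneg]; linarith
        · have hx := hrest' x hxR hx1 hx2 hx3 hx4
          refine noCross_cone_sign (w := -(q4 - o)) ?_ ?_ ?_ hC'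
          · rw [dneg]; linarith
          · rw [dneg]; linarith
          · rw [dneg]; linarith
    refine build_case f g R A2 R A3 A1
      (fun v => if v = R then 0 else if v = A3 then 2 else 1)
      (fun v => if v = R then 0 else if v = A3 then 2 else if v = A2 then 3 else 1)
      ?_ ?_ ?_ ?_ s2R (hfo A2 s23) s3R hg3 ?_ ?_ ?_ ?_ ?_
    · -- rank f
      intro v hv
      by_cases h3 : v = A3
      · subst h3; rw [hf3]; simp [s2R, s23, s3R]
      · rw [hfo v h3]; simp [hv]; split_ifs <;> omega
    · -- rank g
      intro v hv
      by_cases h3 : v = A3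
      · subst h3; rw [hg3]; simp [s1R, s12, s13, s3R]
      · by_cases h2 : v = A2
        · subst h2; rw [hg2]; simp [s3R, s2R, s23]
        · rw [hgo v h3 h2]; simp [hv]; split_ifs <;> omega
    · -- noncrossing T pairs
      intro v w hv hw hne
      by_cases hv3 : v = A3
      · subst hv3
        by_cases hw3 : w = A3
        · subst hw3; exact absurd rfl hne
        · rw [hf3, hfo w hw3]
          exact HX w hw hw3
      · rw [hfo v hv3]
        by_cases hw3 : w = A3
        · subst hw3; rw [hf3]
          intro hC
          exact HX v hv hv3 (cross_comm hC)
        · rw [hfo w hw3]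
          refine hoo v w hv hw (fun h => hne ?_)
          rw [h]
    · -- noncrossing S pairs
      intro v w hv hw hne
      by_cases hv3 : v = A3
      · subst hv3; rw [hg3]
        by_cases hw3 : w = A3
        · subst hw3; exact absurd rfl hne
        · by_cases hw2 : w = A2
          · subst hw2; rw [hg2]
            intro hC
            exact NC q3 q2 q1 m3 m2 m1 d23.symm d13.symm d12.symm
              (cross_swap_left (cross_comm hC))
          · rw [hgo w hw3 hw2]
            exact HY3 w hw hw2 hw3
      · by_cases hv2 : v = A2
        · subst hv2; rw [hg2]
          by_cases hw3 : w = A3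
          · subst hw3; rw [hg3]
            intro hC
            exact NC q3 q2 q1 m3 m2 m1 d23.symm d13.symm d12.symm (cross_swap_left hC)
          · by_cases hw2 : w = A2
            · subst hw2; exact absurd rfl hne
            · rw [hgo w hw3 hw2]
              exact HY2 w hw hw2 hw3
        · rw [hgo v hv3 hv2]
          by_cases hw3 : w = A3
          · subst hw3; rw [hg3]
            intro hC
            exact HY3 v hv hv2 hv3 (cross_comm hC)
          · by_cases hw2 : w = A2
            · subst hw2; rw [hg2]
              intro hC
              exact HY2 v hv hv2 hv3 (cross_comm hC)
            · rw [hgo w hw3 hw2]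
              refine hoo v w hv hw (fun h => hne ?_)
              rw [h]
    · -- T minus e1 in S
      intro v hv hne
      by_cases h3 : v = A3
      · subst h3; rw [hf3]
        exact ⟨A2, s2R, by rw [hg2, Sym2.eq_swap]⟩
      · rw [hfo v h3] at hne ⊢
        have hv2 : v ≠ A2 := fun h => hne (by rw [h])
        exact ⟨v, hv, by rw [hgo v h3 hv2]⟩
    · -- S minus e2 in T
      intro v hv hne
      by_cases h3 : v = A3
      · subst h3; rw [hg3] at hne; exact absurd rfl hne
      · by_cases h2 : v = A2
        · subst h2; rw [hg2]
          exact ⟨A3, s3R, by rw [hf3, Sym2.eq_swap]⟩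
        · rw [hgo v h3 h2]
          exact ⟨v, hv, by rw [hfo v h3]⟩
    · -- e1 not in S
      intro w hw
      by_cases h3 : w = A3
      · subst h3; rw [hg3]
        intro h; rw [Sym2.eq_iff] at h
        rcases h with ⟨e1, e2⟩ | ⟨e1, e2⟩
        · exact s23 e1
        · exact s3R e2.symm
      · by_cases h2 : w = A2
        · subst h2; rw [hg2]
          intro h; rw [Sym2.eq_iff] at h
          rcases h with ⟨e1, e2⟩ | ⟨e1, e2⟩
          · exact s3R e2.symm
          · exact s23 e1
        · rw [hgo w h3 h2]
          intro h; rw [Sym2.eq_iff] at h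
          rcases h with ⟨e1, e2⟩ | ⟨e1, e2⟩
          · exact h2 e1.symm
          · exact s2R e1
    · -- e2 not in T
      intro w hw
      by_cases h3 : w = A3
      · subst h3; rw [hf3]
        intro h; rw [Sym2.eq_iff] at h
        rcases h with ⟨e1, e2⟩ | ⟨e1, e2⟩
        · exact s12 e2
        · exact s23 e1.symm
      · rw [hfo w h3]
        intro h; rw [Sym2.eq_iff] at h
        rcases h with ⟨e1, e2⟩ | ⟨e1, e2⟩
        · exact s1R e2
        · exact s3R e1
    · -- crossing
      have hh3 : det2 (q1 - q3) (o - q3) < 0 := by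
        have e : det2 (q1 - q3) (o - q3) = -det2 (q1 - o) (q3 - o) := by simp [det2]; ring
        rw [e]; linarith
      have hh4 : 0 < det2 (q1 - q3) (q2 - q3) := by
        have e : det2 (q1 - q3) (q2 - q3) = -det2 (q3 - q1) (q2 - q1) := by simp [det2]; ring
        rw [e]; linarith
      exact cross_swap_left (cross_of_dets c23 r21 hh3 hh4)

  · have hD243 : det2 (q4 - q2) (q3 - q2) ≠ 0 :=
      genpos_det2 hgen m2 m4 m3 d24 d23 d34.symm
    rcases lt_or_gt_of_ne hD243 with hcB | hcB'
    ·
      set f : ↥P → ↥P := fun v => if v = A4 then A3 else R with hfdef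
      set g : ↥P → ↥P := fun v => if v = A4 then A2 else if v = A3 then A4 else R with hgdef
      have hf4 : f A4 = A3 := by rw [hfdef]; simp
      have hfo : ∀ v, v ≠ A4 → f v = R := by intro v hv; rw [hfdef]; simp [hv]
      have hg4 : g A4 = A2 := by rw [hgdef]; simp
      have hg3 : g A3 = A4 := by rw [hgdef]; simp [s34]
      have hgo : ∀ v, v ≠ A4 → v ≠ A3 → g v = R := by
        intro v h4 h3; rw [hgdef]; simp [h3, h4]
      have HX : ∀ x : ↥P, x ≠ R → x ≠ A4 → ¬ Cross (q4 : ℝ × ℝ) q3 (x : ℝ × ℝ) o := by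
        intro x hxR hx4 hC
        by_cases hx3 : x = A3
        · subst hx3
          exact NC q3 q4 o m3 m4 hoP d34 n3 n4 (cross_swap_left hC)
        · have hC' : Cross o (x : ℝ × ℝ) q4 q3 := cross_swap_left (cross_comm hC)
          by_cases hx1 : x = A1
          · subst hx1
            exact noCross_cone_sign r31 c34.le (le_of_eq (det2_self _).symm) hC'
          · by_cases hx2 : x = A2
            · subst hx2
              exact noCross_cone_sign r32 c34.le (le_of_eq (det2_self _).symm) hC'
            · have hx := hrest' x hxR hx1 hx2 hx3 hx4
              refine noCross_cone_sign (w := -(q4 - o)) ?_ ?_ ?_ hC'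
              · rw [dneg]; linarith
              · rw [dneg, det2_self]; norm_num
              · rw [dneg]; linarith
      have HY4 : ∀ x : ↥P, x ≠ R → x ≠ A3 → x ≠ A4 →
          ¬ Cross (q4 : ℝ × ℝ) q2 (x : ℝ × ℝ) o := by
        intro x hxR hx3 hx4 hC
        by_cases hx2 : x = A2
        · subst hx2
          exact NC q2 q4 o m2 m4 hoP d24 n2 n4 (cross_swap_left hC)
        · have hC' : Cross o (x : ℝ × ℝ) q4 q2 := cross_swap_left (cross_comm hC)
          by_cases hx1 : x = A1
          · subst hx1
            exact noCross_cone_sign r21 c24.le (le_of_eq (det2_self _).symm) hC'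
          · have hx := hrest' x hxR hx1 hx2 hx3 hx4
            refine noCross_cone_sign (w := -(q4 - o)) ?_ ?_ ?_ hC'
            · rw [dneg]; linarith
            · rw [dneg, det2_self]; norm_num
            · rw [dneg]; linarith
      have HY3 : ∀ x : ↥P, x ≠ R → x ≠ A3 → x ≠ A4 →
          ¬ Cross (q3 : ℝ × ℝ) q4 (x : ℝ × ℝ) o := by
        intro x hxR hx3 hx4 hC
        have hC' : Cross o (x : ℝ × ℝ) q3 q4 := cross_swap_left (cross_comm hC)
        by_cases hx1 : x = A1
        · subst hx1
          exact noCross_cone_sign r31 (le_of_eq (det2_self _).symm) c34.le hC'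
        · by_cases hx2 : x = A2
          · subst hx2
            exact noCross_cone_sign r32 (le_of_eq (det2_self _).symm) c34.le hC'
          · have hx := hrest' x hxR hx1 hx2 hx3 hx4
            refine noCross_cone_sign (w := -(q4 - o)) ?_ ?_ ?_ hC'
            · rw [dneg]; linarith
            · rw [dneg]; linarith
            · rw [dneg, det2_self]; norm_num
      refine build_case f g R A3 R A4 A2
        (fun v => if v = R then 0 else if v = A4 then 2 else 1)
        (fun v => if v = R then 0 else if v = A4 then 2 else if v = A3 then 3 else 1)
        ?_ ?_ ?_ ?_ s3R (hfo A3 s34) s4R hg4 ?_ ?_ ?_ ?_ ?_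
      · intro v hv
        by_cases h4 : v = A4
        · subst h4; rw [hf4]; simp [s3R, s34, s4R]
        · rw [hfo v h4]; simp [hv]; split_ifs <;> omega
      · intro v hv
        by_cases h4 : v = A4
        · subst h4; rw [hg4]; simp [s2R, s24, s23, s4R]
        · by_cases h3 : v = A3
          · subst h3; rw [hg3]; simp [s4R, s3R, s34]
          · rw [hgo v h4 h3]; simp [hv]; split_ifs <;> omega
      · intro v w hv hw hne
        by_cases hv4 : v = A4
        · subst hv4
          by_cases hw4 : w = A4
          · subst hw4; exact absurd rfl hne
          · rw [hf4, hfo w hw4]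
            exact HX w hw hw4
        · rw [hfo v hv4]
          by_cases hw4 : w = A4
          · subst hw4; rw [hf4]
            intro hC
            exact HX v hv hv4 (cross_comm hC)
          · rw [hfo w hw4]
            refine hoo v w hv hw (fun h => hne ?_)
            rw [h]
      · intro v w hv hw hne
        by_cases hv4 : v = A4
        · subst hv4; rw [hg4]
          by_cases hw4 : w = A4
          · subst hw4; exact absurd rfl hne
          · by_cases hw3 : w = A3
            · subst hw3; rw [hg3]
              intro hC
              exact NC q4 q2 q3 m4 m2 m3 d24.symm d34.symm d23 (cross_swap_right hC)
            · rw [hgo w hw4 hw3]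
              exact HY4 w hw hw3 hw4
        · by_cases hv3 : v = A3
          · subst hv3; rw [hg3]
            by_cases hw4 : w = A4
            · subst hw4; rw [hg4]
              intro hC
              exact NC q4 q2 q3 m4 m2 m3 d24.symm d34.symm d23
                (cross_swap_right (cross_comm hC))
            · by_cases hw3 : w = A3
              · subst hw3; exact absurd rfl hne
              · rw [hgo w hw4 hw3]
                exact HY3 w hw hw3 hw4
          · rw [hgo v hv4 hv3]
            by_cases hw4 : w = A4
            · subst hw4; rw [hg4]
              intro hC
              exact HY4 v hv hv3 hv4 (cross_comm hC)
            · by_cases hw3 : w = A3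
              · subst hw3; rw [hg3]
                intro hC
                exact HY3 v hv hv3 hv4 (cross_comm hC)
              · rw [hgo w hw4 hw3]
                refine hoo v w hv hw (fun h => hne ?_)
                rw [h]
      · intro v hv hne
        by_cases h4 : v = A4
        · subst h4; rw [hf4]
          exact ⟨A3, s3R, by rw [hg3, Sym2.eq_swap]⟩
        · rw [hfo v h4] at hne ⊢
          have hv3 : v ≠ A3 := fun h => hne (by rw [h])
          exact ⟨v, hv, by rw [hgo v h4 hv3]⟩
      · intro v hv hne
        by_cases h4 : v = A4
        · subst h4; rw [hg4] at hne; exact absurd rfl hne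
        · by_cases h3 : v = A3
          · subst h3; rw [hg3]
            exact ⟨A4, s4R, by rw [hf4, Sym2.eq_swap]⟩
          · rw [hgo v h4 h3]
            exact ⟨v, hv, by rw [hfo v h4]⟩
      · intro w hw
        by_cases h4 : w = A4
        · subst h4; rw [hg4]
          intro h; rw [Sym2.eq_iff] at h
          rcases h with ⟨e1, e2⟩ | ⟨e1, e2⟩
          · exact s34 e1
          · exact s23 e1.symm
        · by_cases h3 : w = A3
          · subst h3; rw [hg3]
            intro h; rw [Sym2.eq_iff] at h
            rcases h with ⟨e1, e2⟩ | ⟨e1, e2⟩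
            · exact s4R e2.symm
            · exact s34 e1
          · rw [hgo w h4 h3]
            intro h; rw [Sym2.eq_iff] at h
            rcases h with ⟨e1, e2⟩ | ⟨e1, e2⟩
            · exact h3 e1.symm
            · exact s3R e1
      · intro w hw
        by_cases h4 : w = A4
        · subst h4; rw [hf4]
          intro h; rw [Sym2.eq_iff] at h
          rcases h with ⟨e1, e2⟩ | ⟨e1, e2⟩
          · exact s23 e2
          · exact s34 e1.symm
        · rw [hfo w h4]
          intro h; rw [Sym2.eq_iff] at h
          rcases h with ⟨e1, e2⟩ | ⟨e1, e2⟩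
          · exact s2R e2
          · exact s4R e1
      · have hh3 : det2 (q2 - q4) (o - q4) < 0 := by
          have e : det2 (q2 - q4) (o - q4) = -det2 (q2 - o) (q4 - o) := by simp [det2]; ring
          rw [e]; linarith
        have hh4 : 0 < det2 (q2 - q4) (q3 - q4) := by
          have e : det2 (q2 - q4) (q3 - q4) = -det2 (q4 - q2) (q3 - q2) := by simp [det2]; ring
          rw [e]; linarith
        exact cross_swap_left (cross_of_dets c34 r32 hh3 hh4)

    ·
      -- Plücker-derived inequalities
      have pluck : det2 (q1 - o) (q2 - o) * det2 (q3 - o) (q4 - o)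
          - det2 (q1 - o) (q3 - o) * det2 (q2 - o) (q4 - o)
          + det2 (q1 - o) (q4 - o) * det2 (q2 - o) (q3 - o) = 0 := by
        simp [det2]; ring
      have eA : det2 (q3 - q1) (q2 - q1)
          = det2 (q1 - o) (q3 - o) - det2 (q1 - o) (q2 - o) - det2 (q2 - o) (q3 - o) := by
        simp [det2]; ring
      have eB : det2 (q4 - q2) (q3 - q2)
          = det2 (q2 - o) (q4 - o) - det2 (q2 - o) (q3 - o) - det2 (q3 - o) (q4 - o) := by
        simp [det2]; ring
      have hA' : 0 < det2 (q1 - o) (q3 - o) - det2 (q1 - o) (q2 - o)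
          - det2 (q2 - o) (q3 - o) := by rw [← eA]; linarith
      have hB' : 0 < det2 (q2 - o) (q4 - o) - det2 (q2 - o) (q3 - o)
          - det2 (q3 - o) (q4 - o) := by rw [← eB]; linarith
      have h14a : det2 (q1 - o) (q3 - o) + det2 (q3 - o) (q4 - o)
          < det2 (q1 - o) (q4 - o) := by
        nlinarith [mul_pos c13 hB', mul_pos c34 hA', c23]
      have h14b : det2 (q1 - o) (q2 - o) + det2 (q2 - o) (q4 - o)
          < det2 (q1 - o) (q4 - o) := by
        nlinarith [mul_pos c24 hA', mul_pos c12 hB', c23]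
      have hs1 : det2 (q2 - q1) (q3 - q1) < 0 := by
        have e : det2 (q2 - q1) (q3 - q1) = -det2 (q3 - q1) (q2 - q1) := by simp [det2]; ring
        rw [e]; linarith
      have hs2 : det2 (q2 - q1) (q4 - q1) < 0 := by
        have e : det2 (q2 - q1) (q4 - q1)
            = det2 (q1 - o) (q2 - o) + det2 (q2 - o) (q4 - o) - det2 (q1 - o) (q4 - o) := by
          simp [det2]; ring
        rw [e]; linarith
      have HS : ¬ Cross (q1 : ℝ × ℝ) q2 q3 q4 := noCross_sameside hs1 hs2
      set f : ↥P → ↥P := fun v =>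
        if v = A2 then A1 else if v = A3 then A1 else if v = A4 then A3 else R with hfdef
      set g : ↥P → ↥P := fun v =>
        if v = A2 then A1 else if v = A4 then A2 else if v = A3 then A4 else R with hgdef
      have hf2 : f A2 = A1 := by rw [hfdef]; simp
      have hf3 : f A3 = A1 := by rw [hfdef]; simp [s23.symm]
      have hf4 : f A4 = A3 := by rw [hfdef]; simp [s24.symm, s34.symm]
      have hfo : ∀ v, v ≠ A2 → v ≠ A3 → v ≠ A4 → f v = R := by
        intro v h2 h3 h4; rw [hfdef]; simp [h2, h3, h4]
      have hg2 : g A2 = A1 := by rw [hgdef]; simp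
      have hg4 : g A4 = A2 := by rw [hgdef]; simp [s24.symm]
      have hg3 : g A3 = A4 := by rw [hgdef]; simp [s23.symm, s34]
      have hgo : ∀ v, v ≠ A2 → v ≠ A3 → v ≠ A4 → g v = R := by
        intro v h2 h3 h4; rw [hgdef]; simp [h2, h3, h4]
      -- helpers for edges against [o,x] star edges (x = A1 or rest)
      have HO : ∀ x : ↥P, x ≠ R → x ≠ A2 → x ≠ A3 → x ≠ A4 →
          (x = A1 ∨ 0 < det2 (q4 - o) ((x : ℝ × ℝ) - o)) := by
        intro x hxR hx2 hx3 hx4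
        by_cases hx1 : x = A1
        · exact Or.inl hx1
        · exact Or.inr (hrest' x hxR hx1 hx2 hx3 hx4)
      have H21 : ∀ x : ↥P, x ≠ R → x ≠ A2 → x ≠ A3 → x ≠ A4 →
          ¬ Cross (q2 : ℝ × ℝ) q1 (x : ℝ × ℝ) o := by
        intro x hxR hx2 hx3 hx4 hC
        rcases HO x hxR hx2 hx3 hx4 with hx1 | hx
        · subst hx1
          exact NC q1 q2 o m1 m2 hoP d12 n1 n2 (cross_swap_left hC)
        · have hC' : Cross o (x : ℝ × ℝ) q2 q1 := cross_swap_left (cross_comm hC)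
          refine noCross_cone_sign (w := -(q4 - o)) ?_ ?_ ?_ hC'
          · rw [dneg]; linarith
          · rw [dneg]; linarith
          · rw [dneg]; linarith
      have H31 : ∀ x : ↥P, x ≠ R → x ≠ A2 → x ≠ A3 → x ≠ A4 →
          ¬ Cross (q3 : ℝ × ℝ) q1 (x : ℝ × ℝ) o := by
        intro x hxR hx2 hx3 hx4 hC
        rcases HO x hxR hx2 hx3 hx4 with hx1 | hx
        · subst hx1
          exact NC q1 q3 o m1 m3 hoP d13 n1 n3 (cross_swap_left hC)
        · have hC' : Cross o (x : ℝ × ℝ) q3 q1 := cross_swap_left (cross_comm hC)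
          refine noCross_cone_sign (w := -(q4 - o)) ?_ ?_ ?_ hC'
          · rw [dneg]; linarith
          · rw [dneg]; linarith
          · rw [dneg]; linarith
      have H43 : ∀ x : ↥P, x ≠ R → x ≠ A2 → x ≠ A3 → x ≠ A4 →
          ¬ Cross (q4 : ℝ × ℝ) q3 (x : ℝ × ℝ) o := by
        intro x hxR hx2 hx3 hx4 hC
        have hC' : Cross o (x : ℝ × ℝ) q4 q3 := cross_swap_left (cross_comm hC)
        rcases HO x hxR hx2 hx3 hx4 with hx1 | hx
        · subst hx1
          exact noCross_cone_sign r31 c34.le (le_of_eq (det2_self _).symm) hC'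
        · refine noCross_cone_sign (w := -(q4 - o)) ?_ ?_ ?_ hC'
          · rw [dneg]; linarith
          · rw [dneg, det2_self]; norm_num
          · rw [dneg]; linarith
      have H42 : ∀ x : ↥P, x ≠ R → x ≠ A2 → x ≠ A3 → x ≠ A4 →
          ¬ Cross (q4 : ℝ × ℝ) q2 (x : ℝ × ℝ) o := by
        intro x hxR hx2 hx3 hx4 hC
        have hC' : Cross o (x : ℝ × ℝ) q4 q2 := cross_swap_left (cross_comm hC)
        rcases HO x hxR hx2 hx3 hx4 with hx1 | hx
        · subst hx1
          exact noCross_cone_sign r21 c24.le (le_of_eq (det2_self _).symm) hC'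
        · refine noCross_cone_sign (w := -(q4 - o)) ?_ ?_ ?_ hC'
          · rw [dneg]; linarith
          · rw [dneg, det2_self]; norm_num
          · rw [dneg]; linarith
      have H34 : ∀ x : ↥P, x ≠ R → x ≠ A2 → x ≠ A3 → x ≠ A4 →
          ¬ Cross (q3 : ℝ × ℝ) q4 (x : ℝ × ℝ) o := by
        intro x hxR hx2 hx3 hx4 hC
        have hC' : Cross o (x : ℝ × ℝ) q3 q4 := cross_swap_left (cross_comm hC)
        rcases HO x hxR hx2 hx3 hx4 with hx1 | hx
        · subst hx1
          exact noCross_cone_sign r31 (le_of_eq (det2_self _).symm) c34.le hC'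
        · refine noCross_cone_sign (w := -(q4 - o)) ?_ ?_ ?_ hC'
          · rw [dneg]; linarith
          · rw [dneg]; linarith
          · rw [dneg, det2_self]; norm_num
      refine build_case f g R A3 A1 A4 A2
        (fun v => if v = R then 0 else if v = A2 then 2 else if v = A3 then 2
          else if v = A4 then 3 else 1)
        (fun v => if v = R then 0 else if v = A2 then 2 else if v = A4 then 3
          else if v = A3 then 4 else 1)
        ?_ ?_ ?_ ?_ s3R hf3 s4R hg4 ?_ ?_ ?_ ?_ ?_
      · intro v hv
        by_cases h2 : v = A2
        · subst h2; rw [hf2]; simp [s1R, s2R, s3R, s4R, s12, s13, s14, s23, s24, s34, s12.symm, s13.symm, s14.symm, s23.symm, s24.symm, s34.symm]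
        · by_cases h3 : v = A3
          · subst h3; rw [hf3]; simp [s1R, s2R, s3R, s4R, s12, s13, s14, s23, s24, s34, s12.symm, s13.symm, s14.symm, s23.symm, s24.symm, s34.symm]
          · by_cases h4 : v = A4
            · subst h4; rw [hf4]; simp [s1R, s2R, s3R, s4R, s12, s13, s14, s23, s24, s34, s12.symm, s13.symm, s14.symm, s23.symm, s24.symm, s34.symm]
            · rw [hfo v h2 h3 h4]; simp [hv]; split_ifs <;> omega
      · intro v hv
        by_cases h2 : v = A2
        · subst h2; rw [hg2]; simp [s1R, s2R, s3R, s4R, s12, s13, s14, s23, s24, s34, s12.symm, s13.symm, s14.symm, s23.symm, s24.symm, s34.symm]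
        · by_cases h4 : v = A4
          · subst h4; rw [hg4]; simp [s1R, s2R, s3R, s4R, s12, s13, s14, s23, s24, s34, s12.symm, s13.symm, s14.symm, s23.symm, s24.symm, s34.symm]
          · by_cases h3 : v = A3
            · subst h3; rw [hg3]; simp [s1R, s2R, s3R, s4R, s12, s13, s14, s23, s24, s34, s12.symm, s13.symm, s14.symm, s23.symm, s24.symm, s34.symm]
            · rw [hgo v h2 h3 h4]; simp [hv]; split_ifs <;> omega
      · -- noncrossing T
        intro v w hv hw hne
        by_cases hv2 : v = A2
        · subst hv2; rw [hf2]
          by_cases hw2 : w = A2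
          · subst hw2; exact absurd rfl hne
          · by_cases hw3 : w = A3
            · subst hw3; rw [hf3]
              intro hC
              exact NC q1 q2 q3 m1 m2 m3 d12 d13 d23
                (cross_swap_right (cross_swap_left hC))
            · by_cases hw4 : w = A4
              · subst hw4; rw [hf4]
                intro hC
                exact HS (cross_swap_left (cross_swap_right hC))
              · rw [hfo w hw2 hw3 hw4]
                exact H21 w hw hw2 hw3 hw4
        · by_cases hv3 : v = A3
          · subst hv3; rw [hf3]
            by_cases hw2 : w = A2
            · subst hw2; rw [hf2]
              intro hC
              exact NC q1 q2 q3 m1 m2 m3 d12 d13 d23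
                (cross_swap_right (cross_swap_left (cross_comm hC)))
            · by_cases hw3 : w = A3
              · subst hw3; exact absurd rfl hne
              · by_cases hw4 : w = A4
                · subst hw4; rw [hf4]
                  intro hC
                  exact NC q3 q1 q4 m3 m1 m4 d13.symm d34 d14 (cross_swap_right hC)
                · rw [hfo w hw2 hw3 hw4]
                  exact H31 w hw hw2 hw3 hw4
          · by_cases hv4 : v = A4
            · subst hv4; rw [hf4]
              by_cases hw2 : w = A2
              · subst hw2; rw [hf2]
                intro hC
                exact HS (cross_swap_left (cross_swap_right (cross_comm hC)))
              · by_cases hw3 : w = A3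
                · subst hw3; rw [hf3]
                  intro hC
                  exact NC q3 q1 q4 m3 m1 m4 d13.symm d34 d14
                    (cross_swap_right (cross_comm hC))
                · by_cases hw4 : w = A4
                  · subst hw4; exact absurd rfl hne
                  · rw [hfo w hw2 hw3 hw4]
                    exact H43 w hw hw2 hw3 hw4
            · rw [hfo v hv2 hv3 hv4]
              by_cases hw2 : w = A2
              · subst hw2; rw [hf2]
                intro hC
                exact H21 v hv hv2 hv3 hv4 (cross_comm hC)
              · by_cases hw3 : w = A3
                · subst hw3; rw [hf3]
                  intro hC
                  exact H31 v hv hv2 hv3 hv4 (cross_comm hC)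
                · by_cases hw4 : w = A4
                  · subst hw4; rw [hf4]
                    intro hC
                    exact H43 v hv hv2 hv3 hv4 (cross_comm hC)
                  · rw [hfo w hw2 hw3 hw4]
                    refine hoo v w hv hw (fun h => hne ?_)
                    rw [h]
      · -- noncrossing S
        intro v w hv hw hne
        by_cases hv2 : v = A2
        · subst hv2; rw [hg2]
          by_cases hw2 : w = A2
          · subst hw2; exact absurd rfl hne
          · by_cases hw4 : w = A4
            · subst hw4; rw [hg4]
              intro hC
              exact NC q2 q1 q4 m2 m1 m4 d12.symm d24 d14 (cross_swap_right hC)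
            · by_cases hw3 : w = A3
              · subst hw3; rw [hg3]
                intro hC
                exact HS (cross_swap_left hC)
              · rw [hgo w hw2 hw3 hw4]
                exact H21 w hw hw2 hw3 hw4
        · by_cases hv4 : v = A4
          · subst hv4; rw [hg4]
            by_cases hw2 : w = A2
            · subst hw2; rw [hg2]
              intro hC
              exact NC q2 q1 q4 m2 m1 m4 d12.symm d24 d14
                (cross_swap_right (cross_comm hC))
            · by_cases hw4 : w = A4
              · subst hw4; exact absurd rfl hne
              · by_cases hw3 : w = A3
                · subst hw3; rw [hg3]
                  intro hC
                  exact NC q4 q2 q3 m4 m2 m3 d24.symm d34.symm d23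
                    (cross_swap_right hC)
                · rw [hgo w hw2 hw3 hw4]
                  exact H42 w hw hw2 hw3 hw4
          · by_cases hv3 : v = A3
            · subst hv3; rw [hg3]
              by_cases hw2 : w = A2
              · subst hw2; rw [hg2]
                intro hC
                exact HS (cross_swap_left (cross_comm hC))
              · by_cases hw4 : w = A4
                · subst hw4; rw [hg4]
                  intro hC
                  exact NC q4 q2 q3 m4 m2 m3 d24.symm d34.symm d23
                    (cross_swap_right (cross_comm hC))
                · by_cases hw3 : w = A3
                  · subst hw3; exact absurd rfl hne
                  · rw [hgo w hw2 hw3 hw4]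
                    exact H34 w hw hw2 hw3 hw4
            · rw [hgo v hv2 hv3 hv4]
              by_cases hw2 : w = A2
              · subst hw2; rw [hg2]
                intro hC
                exact H21 v hv hv2 hv3 hv4 (cross_comm hC)
              · by_cases hw4 : w = A4
                · subst hw4; rw [hg4]
                  intro hC
                  exact H42 v hv hv2 hv3 hv4 (cross_comm hC)
                · by_cases hw3 : w = A3
                  · subst hw3; rw [hg3]
                    intro hC
                    exact H34 v hv hv2 hv3 hv4 (cross_comm hC)
                  · rw [hgo w hw2 hw3 hw4]
                    refine hoo v w hv hw (fun h => hne ?_)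
                    rw [h]
      · -- T minus e1 ⊆ S
        intro v hv hne
        by_cases h2 : v = A2
        · subst h2; rw [hf2]
          exact ⟨A2, s2R, by rw [hg2]⟩
        · by_cases h3 : v = A3
          · subst h3; rw [hf3] at hne; exact absurd rfl hne
          · by_cases h4 : v = A4
            · subst h4; rw [hf4]
              exact ⟨A3, s3R, by rw [hg3, Sym2.eq_swap]⟩
            · rw [hfo v h2 h3 h4]
              exact ⟨v, hv, by rw [hgo v h2 h3 h4]⟩
      · -- S minus e2 ⊆ T
        intro v hv hne
        by_cases h2 : v = A2
        · subst h2; rw [hg2]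
          exact ⟨A2, s2R, by rw [hf2]⟩
        · by_cases h4 : v = A4
          · subst h4; rw [hg4] at hne; exact absurd rfl hne
          · by_cases h3 : v = A3
            · subst h3; rw [hg3]
              exact ⟨A4, s4R, by rw [hf4, Sym2.eq_swap]⟩
            · rw [hgo v h2 h3 h4]
              exact ⟨v, hv, by rw [hfo v h2 h3 h4]⟩
      · -- e1 ∉ S
        intro w hw
        by_cases h2 : w = A2
        · subst h2; rw [hg2]
          intro h; rw [Sym2.eq_iff] at h
          rcases h with ⟨e1, e2⟩ | ⟨e1, e2⟩
          · exact s23 e1.symm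
          · exact s13 e1.symm
        · by_cases h4 : w = A4
          · subst h4; rw [hg4]
            intro h; rw [Sym2.eq_iff] at h
            rcases h with ⟨e1, e2⟩ | ⟨e1, e2⟩
            · exact s34 e1
            · exact s23 e1.symm
          · by_cases h3 : w = A3
            · subst h3; rw [hg3]
              intro h; rw [Sym2.eq_iff] at h
              rcases h with ⟨e1, e2⟩ | ⟨e1, e2⟩
              · exact s14 e2
              · exact s34 e1
            · rw [hgo w h2 h3 h4]
              intro h; rw [Sym2.eq_iff] at h
              rcases h with ⟨e1, e2⟩ | ⟨e1, e2⟩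
              · exact s1R e2
              · exact s3R e1
      · -- e2 ∉ T
        intro w hw
        by_cases h2 : w = A2
        · subst h2; rw [hf2]
          intro h; rw [Sym2.eq_iff] at h
          rcases h with ⟨e1, e2⟩ | ⟨e1, e2⟩
          · exact s24 e1.symm
          · exact s14 e1.symm
        · by_cases h3 : w = A3
          · subst h3; rw [hf3]
            intro h; rw [Sym2.eq_iff] at h
            rcases h with ⟨e1, e2⟩ | ⟨e1, e2⟩
            · exact s34 e1.symm
            · exact s14 e1.symm
          · by_cases h4 : w = A4
            · subst h4; rw [hf4]
              intro h; rw [Sym2.eq_iff] at h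
              rcases h with ⟨e1, e2⟩ | ⟨e1, e2⟩
              · exact s23 e2
              · exact s34 e1.symm
            · rw [hfo w h2 h3 h4]
              intro h; rw [Sym2.eq_iff] at h
              rcases h with ⟨e1, e2⟩ | ⟨e1, e2⟩
              · exact s2R e2
              · exact s4R e1
      · -- crossing [q1,q3] × [q2,q4]
        have hh2 : det2 (q3 - q1) (q4 - q1) < 0 := by
          have e : det2 (q3 - q1) (q4 - q1)
              = det2 (q1 - o) (q3 - o) + det2 (q3 - o) (q4 - o)
                - det2 (q1 - o) (q4 - o) := by simp [det2]; ring
          rw [e]; linarith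
        have hh3 : det2 (q4 - q2) (q1 - q2) < 0 := by
          have e : det2 (q4 - q2) (q1 - q2)
              = det2 (q1 - o) (q2 - o) + det2 (q2 - o) (q4 - o)
                - det2 (q1 - o) (q4 - o) := by simp [det2]; ring
          rw [e]; linarith
        exact cross_swap_right (cross_swap_left (cross_of_dets hcA' hh2 hh3 hcB'))
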